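/- Let (Ω,T) be a minimal subshift over a finite alphabet A with associated set of words W, and assume (Ω,T) satisfies (SET): for every subadditive function F: W → ℝ the limit lim_{|w|→∞} F(w)/|w| exists and equals inf_{n≥1} F^{(n)}. Then (Ω,T) satisfies (PQ): there is a constant C > 0 with ν(v) ≥ C for every nonempty v ∈ W. -/

import Mathlib

open Filter Topology

namespace SubshiftErgodic

variable {A : Type*}

/-- The shift map `T` on two-sided sequences over `A`: `(T ω) n = ω (n+1)`. -/
def shift (ω : ℤ → A) : ℤ → A := fun n => ω (n + 1)

/-- The `n`-th power of the shift: `(shiftZ n ω) k = ω (k + n)`. -/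
def shiftZ (n : ℤ) (ω : ℤ → A) : ℤ → A := fun k => ω (k + n)

/-- `Ω` is a subshift: a closed, shift-invariant subset of `A^ℤ`. -/
def IsSubshift [TopologicalSpace A] (Ω : Set (ℤ → A)) : Prop :=
  IsClosed Ω ∧ shift '' Ω = Ω

/-- Minimality: every orbit `{T^n ω : n ∈ ℤ}` is dense in `Ω`. -/
def IsMinimal [TopologicalSpace A] (Ω : Set (ℤ → A)) : Prop :=
  ∀ ω ∈ Ω, Ω ⊆ closure {ρ | ∃ n : ℤ, ρ = shiftZ n ω}

/-- The finite word `w` occurs in the sequence `ω` at position `k`. -/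
def OccursAt (w : List A) (ω : ℤ → A) (k : ℤ) : Prop :=
  ∀ i : Fin w.length, ω (k + (i : ℕ)) = w.get i

/-- The set `W = W(Ω)` of finite words occurring as factors of elements of `Ω`. -/
def words (Ω : Set (ℤ → A)) : Set (List A) :=
  {w | ∃ ω ∈ Ω, ∃ k : ℤ, OccursAt w ω k}

/-- `v` occurs as a factor of the finite word `w` at position `i`. -/
def OccursIn (v w : List A) (i : ℕ) : Prop :=
  i + v.length ≤ w.length ∧ v <+: w.drop i

/-- `♯_v(w)`: the number of occurrences of `v` as a factor of `w`. -/
noncomputable def occ (v w : List A) : ℕ :=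
  {i : ℕ | OccursIn v w i}.ncard

/-- `z` is a return word of `u` (relative to the set of words `W`). -/
def IsReturnWord (W : Set (List A)) (z u : List A) : Prop :=
  z ∈ W ∧ z ++ u ∈ W ∧ occ u (z ++ u) = 2 ∧ u <+: z ++ u

/-- The maximal number of pairwise disjoint occurrences of `v` as a factor of `w`. -/
noncomputable def maxDisjoint (v w : List A) : ℕ :=
  sSup {m : ℕ | ∃ s : Fin m → ℕ, (∀ i, OccursIn v w (s i)) ∧
    ∀ i j : Fin m, i < j → s i + v.length ≤ s j}

/-- The filter expressing `|w| → ∞` along words `w ∈ W`. -/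
def wordsFilter (W : Set (List A)) : Filter (List A) :=
  ⨅ L : ℕ, Filter.principal {w | w ∈ W ∧ L ≤ w.length}

/-- `lim_{|w| → ∞} g w = x` over `w ∈ W`: for every `ε > 0` there is `L` with
`‖g w - x‖ ≤ ε` for all `w ∈ W` with `|w| ≥ L`. -/
def TendstoWords {B : Type*} [SeminormedAddCommGroup B] (W : Set (List A))
    (g : List A → B) (x : B) : Prop :=
  ∀ ε : ℝ, 0 < ε → ∃ L : ℕ, ∀ w ∈ W, L ≤ w.length → ‖g w - x‖ ≤ ε

/-- `liminf_{|w| → ∞} g w` over `w ∈ W`, valued in the extended reals. -/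
noncomputable def liminfWords (W : Set (List A)) (g : List A → ℝ) : EReal :=
  Filter.liminf (fun w => (g w : EReal)) (wordsFilter W)

/-- `limsup_{|w| → ∞} g w` over `w ∈ W`, valued in the extended reals. -/
noncomputable def limsupWords (W : Set (List A)) (g : List A → ℝ) : EReal :=
  Filter.limsup (fun w => (g w : EReal)) (wordsFilter W)

/-- `ν(v) = liminf_{|w| → ∞} l_v(w)/|w|`, where
`l_v(w) = (max number of pairwise disjoint copies of v in w) ⬝ |v|`. -/
noncomputable def nu (W : Set (List A)) (v : List A) : EReal :=
  liminfWords W (fun w => ((maxDisjoint v w * v.length : ℕ) : ℝ) / (w.length : ℝ))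

/-- Condition (PQ): uniform positivity of quasiweights. -/
def PQ (W : Set (List A)) : Prop :=
  ∃ C : ℝ, 0 < C ∧ ∀ v ∈ W, v ≠ [] → (C : EReal) ≤ nu W v

/-- Unique ergodicity: all word frequencies `♯_v(w)/|w|` converge as `|w| → ∞`. -/
def UniquelyErgodic (Ω : Set (ℤ → A)) : Prop :=
  ∀ v ∈ words Ω, ∃ x : ℝ,
    TendstoWords (words Ω) (fun w => (occ v w : ℝ) / (w.length : ℝ)) x

/-- `F : W → ℝ` is subadditive. -/
def IsSubadditive (W : Set (List A)) (F : List A → ℝ) : Prop :=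
  ∀ a b : List A, a ∈ W → b ∈ W → a ++ b ∈ W → F (a ++ b) ≤ F a + F b

/-- `F^(n) = max { F v / |v| : v ∈ W, |v| = n }`. -/
noncomputable def wordSup (W : Set (List A)) (F : List A → ℝ) (n : ℕ) : ℝ :=
  sSup ((fun v => F v / (v.length : ℝ)) '' {v | v ∈ W ∧ v.length = n})

/-- Condition (SET): the uniform subadditive ergodic theorem holds, i.e. for every
subadditive `F` the limit `lim_{|w|→∞} F(w)/|w|` exists and equals `inf_{n ≥ 1} F^(n)`
(in the extended reals). -/
def SET (W : Set (List A)) : Prop :=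
  ∀ F : List A → ℝ, IsSubadditive W F →
    Filter.Tendsto (fun w => ((F w / (w.length : ℝ) : ℝ) : EReal)) (wordsFilter W)
      (nhds (⨅ n : {n : ℕ // 1 ≤ n}, ((wordSup W F n.1 : ℝ) : EReal)))

/-- A Banach-space-valued function `F : W → B` is additive. -/
def IsAdditive {B : Type*} [SeminormedAddCommGroup B] (W : Set (List A))
    (F : List A → B) : Prop :=
  ∃ D : ℝ, 0 < D ∧ ∃ c : ℕ → ℝ, Antitone c ∧ (∀ n, 0 ≤ c n) ∧
    Filter.Tendsto c Filter.atTop (nhds 0) ∧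
    (∀ vs : List (List A), (∀ v ∈ vs, v ∈ W) → vs.flatten ∈ W →
      ‖F vs.flatten - (vs.map F).sum‖ ≤ (vs.map fun v => c v.length * (v.length : ℝ)).sum) ∧
    ∀ v ∈ W, ‖F v‖ ≤ D * (v.length : ℝ)

/-- Condition (HP): powers in `W` have uniformly bounded exponent. -/
def HP (W : Set (List A)) : Prop :=
  ∃ N : ℕ, 0 < N ∧ ∀ v : List A, v ≠ [] → ∀ k : ℕ,
    (List.replicate k v).flatten ∈ W → k ≤ N

/-- Condition (PW): uniform positivity of weights. -/
def PW (W : Set (List A)) : Prop :=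
  ∃ E : ℝ, 0 < E ∧ ∀ v ∈ W, v ≠ [] →
    (E : EReal) ≤ liminfWords W (fun w => ((occ v w * v.length : ℕ) : ℝ) / (w.length : ℝ))

/-- Linear repetitivity. -/
def LinearlyRepetitive (W : Set (List A)) : Prop :=
  ∃ D : ℝ, 0 < D ∧ ∀ v ∈ W, v ≠ [] → ∀ w ∈ W, D * (v.length : ℝ) ≤ (w.length : ℝ) →
    v <:+: w

/-- Aperiodicity: no element of `Ω` is periodic. -/
def Aperiodic (Ω : Set (ℤ → A)) : Prop :=
  ∀ ω ∈ Ω, ∀ p : ℕ, 1 ≤ p → shiftZ (p : ℤ) ω ≠ ω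

/-- `m(n)`: the minimal length of a return word of a word of length `n` in `W`. -/
noncomputable def mRet (W : Set (List A)) (n : ℕ) : ℕ :=
  sInf {k : ℕ | ∃ v z : List A, v ∈ W ∧ v.length = n ∧ IsReturnWord W z v ∧ z.length = k}

/-- `k_ω^w`: the minimal nonnegative position at which `w` occurs in `ω`. -/
noncomputable def firstOcc (ω : ℤ → A) (w : List A) : ℕ :=
  sInf {k : ℕ | OccursAt w ω (k : ℤ)}

/-- `F_ω(w) = ∑_{j=0}^{|w|-1} f(T^{k_ω^w + j} ω)`. -/
noncomputable def birkhoffF {B : Type*} [AddCommMonoid B] (f : (ℤ → A) → B)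
    (ω : ℤ → A) (w : List A) : B :=
  ∑ j ∈ Finset.range w.length, f (shiftZ ((firstOcc ω w : ℤ) + (j : ℤ)) ω)


section AuxA
variable {A : Type*}

lemma occursIn_iff_getElem {v w : List A} {i : ℕ} :
    OccursIn v w i ↔ i + v.length ≤ w.length ∧
      ∀ (j : ℕ) (hj : j < v.length) (hw : i + j < w.length), w[i+j] = v[j] := by
  constructor
  · rintro ⟨h1, h2⟩
    refine ⟨h1, fun j hj hw => ?_⟩
    have hd : j < (w.drop i).length := by simp; omega
    have := h2.getElem (i := j) hj
    rw [List.getElem_drop] at this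
    exact this.symm
  · rintro ⟨h1, h2⟩
    refine ⟨h1, ?_⟩
    rw [List.prefix_iff_eq_take]
    refine List.ext_getElem (by simp; omega) (fun n hn1 hn2 => ?_)
    rw [List.getElem_take, List.getElem_drop]
    exact (h2 n hn1 (by omega)).symm

lemma OccursIn.length_le {v w : List A} {i : ℕ} (h : OccursIn v w i) :
    i + v.length ≤ w.length := h.1

lemma OccursIn.getElem {v w : List A} {i : ℕ} (h : OccursIn v w i) {j : ℕ}
    (hj : j < v.length) (hw : i + j < w.length) : w[i+j] = v[j] :=
  (occursIn_iff_getElem.mp h).2 j hj hw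

lemma occursIn_append_left {v a : List A} (b : List A) {i : ℕ} (h : OccursIn v a i) :
    OccursIn v (a ++ b) i := by
  rw [occursIn_iff_getElem] at h ⊢
  refine ⟨by simp; omega, fun j hj hw => ?_⟩
  rw [List.getElem_append_left (by omega)]
  exact h.2 j hj (by omega)

lemma occursIn_append_right (a : List A) {v b : List A} {i : ℕ} (h : OccursIn v b i) :
    OccursIn v (a ++ b) (a.length + i) := by
  rw [occursIn_iff_getElem] at h ⊢
  refine ⟨by simp; omega, fun j hj hw => ?_⟩
  rw [List.getElem_append_right (by omega)]
  convert h.2 j hj (by simp at hw; omega) using 2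
  omega

lemma occursIn_trans {v u w : List A} {i j : ℕ} (h1 : OccursIn v u j) (h2 : OccursIn u w i) :
    OccursIn v w (i + j) := by
  rw [occursIn_iff_getElem] at h1 h2 ⊢
  refine ⟨by omega, fun t ht hw => ?_⟩
  have e1 := h2.2 (j+t) (by omega) (by omega)
  have e2 := h1.2 t ht (by omega)
  rw [← e2, ← e1]
  congr 1
  omega

lemma occursIn_self {v : List A} : OccursIn v v 0 := by
  rw [occursIn_iff_getElem]
  exact ⟨by omega, fun j hj hw => by simp⟩

lemma occursIn_take {v w : List A} {n i : ℕ} (h : OccursIn v (w.take n) i) :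
    OccursIn v w i := by
  have : OccursIn (w.take n) w 0 := by
    rw [occursIn_iff_getElem]
    refine ⟨by simp, fun j hj hw => by simpa using (List.getElem_take w (j := n) (i := j) (h := hj)).symm⟩
  simpa using occursIn_trans h this

lemma occursIn_drop {v w : List A} {n i : ℕ} (hn : n ≤ w.length) (h : OccursIn v (w.drop n) i) :
    OccursIn v w (n + i) := by
  have : OccursIn (w.drop n) w n := by
    rw [occursIn_iff_getElem]
    exact ⟨by simp; omega, fun j hj hw => (List.getElem_drop (xs := w) (i := n) (j := j)).symm⟩
  exact occursIn_trans h this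

lemma occursAt_iff_getElem {w : List A} {ω : ℤ → A} {k : ℤ} :
    OccursAt w ω k ↔ ∀ (j : ℕ) (hj : j < w.length), ω (k + j) = w[j] := by
  constructor
  · intro h j hj; simpa using h ⟨j, hj⟩
  · intro h i; simpa using h i i.2

lemma occursAt_sub {v w : List A} {ω : ℤ → A} {k : ℤ} {i : ℕ}
    (hw : OccursAt w ω k) (hv : OccursIn v w i) : OccursAt v ω (k + i) := by
  rw [occursAt_iff_getElem] at hw ⊢
  intro j hj
  have hlen : i + j < w.length := by have := hv.length_le; omega
  have := hw (i + j) hlen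
  rw [hv.getElem hj hlen] at this
  rw [← this]
  congr 1
  push_cast
  ring

lemma words_factor {Ω : Set (ℤ → A)} {w v : List A} {i : ℕ}
    (hw : w ∈ words Ω) (h : OccursIn v w i) : v ∈ words Ω := by
  obtain ⟨ω, hω, k, hk⟩ := hw
  exact ⟨ω, hω, k + i, occursAt_sub hk h⟩

lemma words_infix {Ω : Set (ℤ → A)} {w v : List A}
    (hw : w ∈ words Ω) (h : v <+: w) : v ∈ words Ω := by
  exact words_factor (i := 0) hw ⟨by simpa using h.length_le, by simpa using h⟩

lemma ofFn_mem_words {Ω : Set (ℤ → A)} {ω : ℤ → A} (hω : ω ∈ Ω) (k : ℤ) (n : ℕ) :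
    List.ofFn (fun i : Fin n => ω (k + i)) ∈ words Ω := by
  refine ⟨ω, hω, k, ?_⟩
  rw [occursAt_iff_getElem]
  intro j hj
  have hj' : j < n := by simpa using hj
  rw [List.getElem_ofFn]

lemma exists_word_length {Ω : Set (ℤ → A)} (hne : Ω.Nonempty) (n : ℕ) :
    ∃ w ∈ words Ω, w.length = n := by
  obtain ⟨ω, hω⟩ := hne
  exact ⟨_, ofFn_mem_words hω 0 n, by simp⟩

end AuxA


section AuxB
variable {A : Type*}

/-- `l_v(w)` as a natural number. -/
noncomputable def ell (v w : List A) : ℕ := maxDisjoint v w * v.length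

/-- The set of sizes of disjoint packings. -/
def packings (v w : List A) : Set ℕ :=
  {m : ℕ | ∃ s : Fin m → ℕ, (∀ i, OccursIn v w (s i)) ∧
    ∀ i j : Fin m, i < j → s i + v.length ≤ s j}

lemma maxDisjoint_def (v w : List A) : maxDisjoint v w = sSup (packings v w) := rfl

lemma zero_mem_packings {v w : List A} : 0 ∈ packings v w :=
  ⟨fun i => i.elim0, fun i => i.elim0, fun i => i.elim0⟩

lemma packings_mul_le {v w : List A} {m : ℕ} (h : m ∈ packings v w) :
    m * v.length ≤ w.length := by
  obtain ⟨s, hs, ho⟩ := h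
  rcases Nat.eq_zero_or_pos m with hm | hm
  · simp [hm]
  have key : ∀ t (ht : t < m), t * v.length ≤ s ⟨t, ht⟩ := by
    intro t
    induction t with
    | zero => intro _; simp
    | succ t ih =>
      intro ht
      have h1 := ih (by omega)
      have h2 := ho ⟨t, by omega⟩ ⟨t+1, ht⟩ (by simp)
      calc (t+1) * v.length = t * v.length + v.length := by ring
      _ ≤ s ⟨t, by omega⟩ + v.length := by omega
      _ ≤ s ⟨t+1, ht⟩ := h2
  have hlast := key (m-1) (by omega)
  have hocc := (hs ⟨m-1, by omega⟩).length_le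
  have : (m-1) * v.length + v.length = m * v.length := by
    cases m with
    | zero => omega
    | succ m => simp [Nat.succ_sub_one]; ring
  omega

lemma packings_bddAbove {v w : List A} (hv : v ≠ []) : BddAbove (packings v w) := by
  refine ⟨w.length, fun m hm => ?_⟩
  have := packings_mul_le hm
  have hv' : 1 ≤ v.length := List.length_pos_iff.mpr hv
  calc m = m * 1 := (mul_one m).symm
  _ ≤ m * v.length := Nat.mul_le_mul_left m hv'
  _ ≤ w.length := this

lemma le_maxDisjoint {v w : List A} (hv : v ≠ []) {m : ℕ} (h : m ∈ packings v w) :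
    m ≤ maxDisjoint v w :=
  le_csSup (packings_bddAbove hv) h

lemma maxDisjoint_mem {v w : List A} (hv : v ≠ []) : maxDisjoint v w ∈ packings v w :=
  Nat.sSup_mem ⟨0, zero_mem_packings⟩ (packings_bddAbove hv)

lemma ell_le_length {v w : List A} (hv : v ≠ []) : ell v w ≤ w.length :=
  packings_mul_le (maxDisjoint_mem hv)

lemma occursIn_of_prefix {u w : List A} (h : u <+: w) : OccursIn u w 0 :=
  ⟨by simpa using h.length_le, by simpa using h⟩

lemma packings_add {v a b : List A} {m1 m2 : ℕ}
    (h1 : m1 ∈ packings v a) (h2 : m2 ∈ packings v b) :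
    m1 + m2 ∈ packings v (a ++ b) := by
  obtain ⟨sa, hsa, hoa⟩ := h1
  obtain ⟨sb, hsb, hob⟩ := h2
  refine ⟨fun i => if h : (i : ℕ) < m1 then sa ⟨i, h⟩
    else a.length + sb ⟨(i : ℕ) - m1, by omega⟩, fun i => ?_, fun i j hij => ?_⟩
  · by_cases h : (i : ℕ) < m1
    · simp only [dif_pos h]; exact occursIn_append_left b (hsa _)
    · simp only [dif_neg h]; exact occursIn_append_right a (hsb _)
  · have hij' : (i : ℕ) < (j : ℕ) := hij
    by_cases hi : (i : ℕ) < m1 <;> by_cases hj : (j : ℕ) < m1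
    · simp only [dif_pos hi, dif_pos hj]
      exact hoa ⟨i, hi⟩ ⟨j, hj⟩ (by simpa using hij')
    · simp only [dif_pos hi, dif_neg hj]
      have := (hsa ⟨i, hi⟩).length_le
      omega
    · exact absurd hij' (by omega)
    · simp only [dif_neg hi, dif_neg hj]
      have := hob ⟨(i:ℕ) - m1, by omega⟩ ⟨(j:ℕ) - m1, by omega⟩ (by simp; omega)
      omega

lemma maxDisjoint_append {v : List A} (hv : v ≠ []) (a b : List A) :
    maxDisjoint v a + maxDisjoint v b ≤ maxDisjoint v (a ++ b) :=
  le_maxDisjoint hv (packings_add (maxDisjoint_mem hv) (maxDisjoint_mem hv))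

lemma ell_append {v : List A} (hv : v ≠ []) (a b : List A) :
    ell v a + ell v b ≤ ell v (a ++ b) := by
  unfold ell
  rw [← add_mul]
  exact Nat.mul_le_mul_right _ (maxDisjoint_append hv a b)

lemma maxDisjoint_le_of_occursIn {v u w : List A} (hv : v ≠ []) {t : ℕ}
    (h : OccursIn u w t) : maxDisjoint v u ≤ maxDisjoint v w := by
  obtain ⟨s, hs, ho⟩ := maxDisjoint_mem hv (w := u)
  refine le_maxDisjoint hv ⟨fun i => t + s i, fun i => occursIn_trans (hs i) h,
    fun i j hij => ?_⟩
  have := ho i j hij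
  dsimp only
  omega

lemma ell_le_of_occursIn {v u w : List A} (hv : v ≠ []) {t : ℕ}
    (h : OccursIn u w t) : ell v u ≤ ell v w :=
  Nat.mul_le_mul_right _ (maxDisjoint_le_of_occursIn hv h)

lemma one_le_maxDisjoint {v w : List A} (hv : v ≠ []) {t : ℕ} (h : OccursIn v w t) :
    1 ≤ maxDisjoint v w := by
  refine le_maxDisjoint hv ⟨fun _ => t, fun _ => h, fun i j hij => ?_⟩
  exact absurd (Subsingleton.elim i j) (ne_of_lt hij)

lemma length_le_ell {v w : List A} (hv : v ≠ []) {t : ℕ} (h : OccursIn v w t) :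
    v.length ≤ ell v w := by
  have := one_le_maxDisjoint hv h
  unfold ell
  nlinarith

lemma maxDisjoint_eq_zero {v w : List A} (h : ∀ t, ¬ OccursIn v w t) :
    maxDisjoint v w = 0 := by
  rw [maxDisjoint_def]
  have : packings v w = {0} := by
    ext m
    simp only [Set.mem_singleton_iff]
    constructor
    · rintro ⟨s, hs, -⟩
      by_contra hm
      exact h _ (hs ⟨0, by omega⟩)
    · rintro rfl; exact zero_mem_packings
  rw [this]
  simp

lemma ell_eq_zero {v w : List A} (h : ∀ t, ¬ OccursIn v w t) : ell v w = 0 := by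
  unfold ell
  rw [maxDisjoint_eq_zero h]
  simp

lemma maxDisjoint_snoc {v w : List A} (hv : v ≠ []) :
    maxDisjoint v w + 1 ≤ maxDisjoint v (w ++ v) := by
  have h2 : 1 ≤ maxDisjoint v v := one_le_maxDisjoint hv occursIn_self
  have := maxDisjoint_append hv w v
  omega

lemma ell_snoc {v w : List A} (hv : v ≠ []) :
    ell v w + v.length ≤ ell v (w ++ v) := by
  have := maxDisjoint_snoc hv (w := w)
  unfold ell
  nlinarith

lemma chop_le_maxDisjoint {v w : List A} (hv : v ≠ []) {L q : ℕ} (hL : 0 < L)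
    (hq : q * L ≤ w.length)
    (h : ∀ i, i < q → ∃ t, OccursIn v ((w.drop (i*L)).take L) t) :
    q ≤ maxDisjoint v w := by
  choose t ht using h
  refine le_maxDisjoint hv ⟨fun i => (i : ℕ) * L + t i i.2, fun i => ?_, fun i j hij => ?_⟩
  · have hocc := ht i i.2
    have h1 : OccursIn v (w.drop ((i:ℕ)*L)) (t i i.2) := occursIn_take hocc
    have h2 : (i:ℕ)*L ≤ w.length := by
      have : (i:ℕ)+1 ≤ q := i.2
      nlinarith
    exact occursIn_drop h2 h1
  · have hi := (ht i i.2).length_le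
    have hlen : ((w.drop ((i:ℕ)*L)).take L).length ≤ L := by simp
    have hij' : (i:ℕ) < (j:ℕ) := hij
    have : ((i:ℕ)+1) * L ≤ (j:ℕ) * L := Nat.mul_le_mul_right L (by omega)
    nlinarith

lemma sum_ell_blocks {v : List A} (hv : v ≠ []) (z : List A) (n : ℕ) :
    ∀ q, q * n ≤ z.length →
      ∑ i ∈ Finset.range q, ell v ((z.drop (i*n)).take n) ≤ ell v z := by
  have key : ∀ q, q * n ≤ z.length →
      ∑ i ∈ Finset.range q, ell v ((z.drop (i*n)).take n) ≤ ell v (z.take (q*n)) := by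
    intro q
    induction q with
    | zero => intro _; simp
    | succ q ih =>
      intro hq
      have hq' : q * n ≤ z.length := by nlinarith
      rw [Finset.sum_range_succ]
      have heq : z.take ((q+1)*n) = z.take (q*n) ++ ((z.drop (q*n)).take n) := by
        have : (q+1)*n = q*n + n := by ring
        rw [this, List.take_add]
      calc ∑ i ∈ Finset.range q, ell v ((z.drop (i*n)).take n) + ell v ((z.drop (q*n)).take n)
          ≤ ell v (z.take (q*n)) + ell v ((z.drop (q*n)).take n) := by
            have := ih hq'; omega
      _ ≤ ell v (z.take (q*n) ++ (z.drop (q*n)).take n) := ell_append hv _ _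
      _ = ell v (z.take ((q+1)*n)) := by rw [heq]
  intro q hq
  calc ∑ i ∈ Finset.range q, ell v ((z.drop (i*n)).take n) ≤ ell v (z.take (q*n)) := key q hq
  _ ≤ ell v z := ell_le_of_occursIn hv (occursIn_of_prefix (List.take_prefix (q*n) z))

end AuxB


section AuxC
variable {A : Type*}

/-- Minimal number of uncovered letters when covering `w` by disjoint blocks from the
family `v`. -/
noncomputable def dp (v : ℕ → List A) (w : List A) : ℕ :=
  if h : w.length = 0 then 0
  else sInf ({dp v (w.take (w.length - 1)) + 1} ∪
    ((fun k => dp v (w.take (w.length - max 1 (v k).length))) ''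
      {k | v k <:+ w ∧ v k ≠ []}))
termination_by w.length
decreasing_by
  · simp [List.length_take]; omega
  · simp [List.length_take]; omega

lemma dp_nil (v : ℕ → List A) : dp v [] = 0 := by rw [dp]; simp

lemma dp_eq (v : ℕ → List A) {w : List A} (h : w ≠ []) :
    dp v w = sInf ({dp v (w.take (w.length - 1)) + 1} ∪
      ((fun k => dp v (w.take (w.length - max 1 (v k).length))) ''
        {k | v k <:+ w ∧ v k ≠ []})) := by
  rw [dp, dif_neg (fun e => h (List.length_eq_zero_iff.mp e))]

lemma dp_le_take (v : ℕ → List A) {w : List A} (h : w ≠ []) :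
    dp v w ≤ dp v (w.take (w.length - 1)) + 1 := by
  rw [dp_eq v h]
  exact Nat.sInf_le (Set.mem_union_left _ rfl)

lemma dp_le_suffix (v : ℕ → List A) {w : List A} (hw : w ≠ []) {k : ℕ}
    (hs : v k <:+ w) (hk : v k ≠ []) :
    dp v w ≤ dp v (w.take (w.length - (v k).length)) := by
  rw [dp_eq v hw]
  refine Nat.sInf_le (Set.mem_union_right _ ⟨k, ⟨hs, hk⟩, ?_⟩)
  dsimp only
  have hm : 1 ≤ (v k).length := List.length_pos_iff.mpr hk
  have e : w.length - max 1 (v k).length = w.length - (v k).length := by omega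
  rw [e]

lemma dp_self_eq_zero (v : ℕ → List A) {k : ℕ} (hk : v k ≠ []) : dp v (v k) = 0 := by
  have := dp_le_suffix v hk (List.suffix_refl (v k)) hk
  simpa [dp_nil] using this

lemma dp_spec (v : ℕ → List A) {w : List A} (hw : w ≠ []) :
    dp v w = dp v (w.take (w.length - 1)) + 1 ∨
    ∃ k, v k <:+ w ∧ v k ≠ [] ∧ dp v w = dp v (w.take (w.length - (v k).length)) := by
  rw [dp_eq v hw]
  have hmem := Nat.sInf_mem (s := {dp v (w.take (w.length - 1)) + 1} ∪
      ((fun k => dp v (w.take (w.length - max 1 (v k).length))) ''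
        {k | v k <:+ w ∧ v k ≠ []})) ⟨_, Set.mem_union_left _ rfl⟩
  rcases hmem with h | ⟨k, ⟨hs, hk⟩, h⟩
  · exact Or.inl h
  · refine Or.inr ⟨k, hs, hk, ?_⟩
    dsimp only at h
    have hm : 1 ≤ (v k).length := List.length_pos_iff.mpr hk
    have e : w.length - max 1 (v k).length = w.length - (v k).length := by omega
    rw [← h, e]

lemma dp_subadd (v : ℕ → List A) (a b : List A) : dp v (a ++ b) ≤ dp v a + dp v b := by
  have H : ∀ n (b : List A), b.length ≤ n → dp v (a ++ b) ≤ dp v a + dp v b := by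
    intro n
    induction n with
    | zero =>
      intro b hb
      have : b = [] := List.length_eq_zero_iff.mp (by omega)
      subst this; simp [dp_nil]
    | succ n ih =>
      intro b hb
      by_cases hbe : b = []
      · subst hbe; simp [dp_nil]
      have hab : a ++ b ≠ [] := by simp [hbe]
      have hbl : 1 ≤ b.length := List.length_pos_iff.mpr hbe
      rcases dp_spec v hbe with h | ⟨k, hs, hk, h⟩
      · have e : (a ++ b).length - 1 = a.length + (b.length - 1) := by simp; omega
        have e2 : (a ++ b).take ((a ++ b).length - 1) = a ++ b.take (b.length - 1) := by
          rw [e, List.take_length_add_append]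
        have h1 := dp_le_take v hab
        rw [e2] at h1
        have h2 := ih (b.take (b.length - 1)) (by simp [List.length_take]; omega)
        omega
      · have hm : 1 ≤ (v k).length := List.length_pos_iff.mpr hk
        have hmb : (v k).length ≤ b.length := by obtain ⟨t, ht⟩ := hs; rw [← ht]; simp
        have e : (a ++ b).length - (v k).length = a.length + (b.length - (v k).length) := by
          simp; omega
        have e2 : (a ++ b).take ((a ++ b).length - (v k).length)
            = a ++ b.take (b.length - (v k).length) := by
          rw [e, List.take_length_add_append]
        have h1 := dp_le_suffix v hab (hs.trans (List.suffix_append a b)) hk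
        rw [e2] at h1
        have h2 := ih (b.take (b.length - (v k).length)) (by simp [List.length_take]; omega)
        omega
  exact H b.length b le_rfl

lemma dp_ge (v : ℕ → List A) (hv : ∀ k, v k ≠ []) (K : ℕ) :
    ∀ w : List A, (∀ j, K ≤ j → w.length < (v j).length) →
      w.length ≤ dp v w + ∑ j ∈ Finset.range K, ell (v j) w := by
  have H : ∀ n (w : List A), w.length ≤ n → (∀ j, K ≤ j → w.length < (v j).length) →
      w.length ≤ dp v w + ∑ j ∈ Finset.range K, ell (v j) w := by
    intro n
    induction n with
    | zero =>
      intro w hw _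
      simp [List.length_eq_zero_iff.mp (by omega : w.length = 0)]
    | succ n ih =>
      intro w hw hK
      by_cases hwe : w = []
      · simp [hwe]
      have hwl : 1 ≤ w.length := List.length_pos_iff.mpr hwe
      rcases dp_spec v hwe with h | ⟨k, hs, hk, h⟩
      · set w' := w.take (w.length - 1) with hw'
        have hlen : w'.length = w.length - 1 := by simp [hw', List.length_take]
        have h2 := ih w' (by omega) (fun j hj => by have := hK j hj; omega)
        have hmono : ∀ j, ell (v j) w' ≤ ell (v j) w := fun j =>
          ell_le_of_occursIn (hv j) (occursIn_of_prefix (List.take_prefix _ w))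
        have hsum : ∑ j ∈ Finset.range K, ell (v j) w' ≤ ∑ j ∈ Finset.range K, ell (v j) w :=
          Finset.sum_le_sum (fun j _ => hmono j)
        omega
      · obtain ⟨t, ht⟩ := hs
        have hm : 1 ≤ (v k).length := List.length_pos_iff.mpr hk
        have hmb : (v k).length ≤ w.length := by rw [← ht]; simp
        have htake : w.take (w.length - (v k).length) = t := by
          rw [← ht]
          have : (t ++ v k).length - (v k).length = t.length := by simp
          rw [this]
          simpa using List.take_length_add_append 0
        rw [htake] at h
        have hkK : k < K := by
          by_contra hkK
          have := hK k (by omega)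
          omega
        have htlen : t.length = w.length - (v k).length := by
          rw [← ht]; simp
        have h2 := ih t (by omega) (fun j hj => by have := hK j hj; omega)
        have hsum : ∑ j ∈ Finset.range K, (ell (v j) t + if j = k then (v k).length else 0)
            ≤ ∑ j ∈ Finset.range K, ell (v j) w := by
          refine Finset.sum_le_sum (fun j _ => ?_)
          by_cases hjk : j = k
          · subst hjk
            simp only [if_pos rfl]
            rw [← ht]
            exact ell_snoc hk
          · simp only [if_neg hjk, add_zero]
            refine ell_le_of_occursIn (hv j) (occursIn_of_prefix ?_)
            rw [← ht]
            exact List.prefix_append t (v k)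
        rw [Finset.sum_add_distrib, Finset.sum_ite_eq' (Finset.range K) k] at hsum
        simp only [Finset.mem_range, hkK, if_pos] at hsum
        omega
  exact fun w => H w.length w le_rfl


end AuxC


section AuxD
variable {A : Type*}

lemma wordsFilter_directed (W : Set (List A)) :
    Directed (fun x1 x2 => x1 ≥ x2)
      (fun L : ℕ => Filter.principal {w : List A | w ∈ W ∧ L ≤ w.length}) := by
  intro a b
  refine ⟨max a b, ?_, ?_⟩ <;>
    · simp only [ge_iff_le, Filter.le_principal_iff, Filter.mem_principal]
      intro w hw
      obtain ⟨h1, h2⟩ := hw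
      exact ⟨h1, by omega⟩

lemma mem_wordsFilter {W : Set (List A)} {S : Set (List A)} :
    S ∈ wordsFilter W ↔ ∃ L : ℕ, ∀ w ∈ W, L ≤ w.length → w ∈ S := by
  rw [wordsFilter, Filter.mem_iInf_of_directed (wordsFilter_directed W)]
  simp only [Filter.mem_principal, Set.subset_def, Set.mem_setOf_eq]
  constructor
  · rintro ⟨L, h⟩; exact ⟨L, fun w hw hl => h w ⟨hw, hl⟩⟩
  · rintro ⟨L, h⟩; exact ⟨L, fun w hw => h w hw.1 hw.2⟩

lemma wordsFilter_neBot {W : Set (List A)} (hlen : ∀ n, ∃ w ∈ W, w.length = n) :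
    (wordsFilter W).NeBot := by
  refine Filter.iInf_neBot_of_directed (wordsFilter_directed W) (fun L => ?_)
  rw [Filter.principal_neBot_iff]
  obtain ⟨w, hw, hl⟩ := hlen L
  exact ⟨w, hw, by omega⟩

lemma tendsto_wordsFilter_mem {W : Set (List A)} {f : List A → EReal} {x : EReal}
    (h : Filter.Tendsto f (wordsFilter W) (nhds x)) {U : Set EReal} (hU : IsOpen U)
    (hx : x ∈ U) : ∃ L : ℕ, ∀ w ∈ W, L ≤ w.length → f w ∈ U := by
  have := h (hU.mem_nhds hx)
  rwa [Filter.mem_map, mem_wordsFilter] at this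

lemma wordsSet_finite [Finite A] (W : Set (List A)) (n : ℕ) :
    {u : List A | u ∈ W ∧ u.length = n}.Finite :=
  (List.finite_length_eq A n).subset (fun u hu => hu.2)

lemma le_wordSup [Finite A] {W : Set (List A)} (F : List A → ℝ) {u : List A} {n : ℕ}
    (hu : u ∈ W) (hlen : u.length = n) : F u / n ≤ wordSup W F n := by
  refine le_csSup (((wordsSet_finite W n).image _).bddAbove) ?_
  exact ⟨u, ⟨hu, hlen⟩, by dsimp only; rw [hlen]⟩

lemma wordSup_le {W : Set (List A)} {F : List A → ℝ} {n : ℕ} {c : ℝ}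
    (hne : ∃ u ∈ W, u.length = n) (h : ∀ u ∈ W, u.length = n → F u / n ≤ c) :
    wordSup W F n ≤ c := by
  refine csSup_le ?_ ?_
  · obtain ⟨u, hu, hl⟩ := hne
    exact ⟨_, ⟨u, ⟨hu, hl⟩, rfl⟩⟩
  · rintro y ⟨u, ⟨hu, hl⟩, rfl⟩
    dsimp only
    rw [hl]
    exact h u hu hl

end AuxD


section AuxF
variable {A : Type*}

lemma shiftZ_shiftZ (a b : ℤ) (ω : ℤ → A) : shiftZ a (shiftZ b ω) = shiftZ (a + b) ω := by
  funext k
  simp only [shiftZ]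
  congr 1
  ring

lemma shiftZ_zero (ω : ℤ → A) : shiftZ 0 ω = ω := by funext k; simp [shiftZ]

lemma shiftZ_one (ω : ℤ → A) : shiftZ 1 ω = shift ω := by funext k; simp [shiftZ, shift]

lemma shift_mem {Ω : Set (ℤ → A)} [TopologicalSpace A] (hΩ : IsSubshift Ω)
    {ω : ℤ → A} (h : ω ∈ Ω) : shift ω ∈ Ω := by
  have : shift ω ∈ shift '' Ω := ⟨ω, h, rfl⟩
  rwa [hΩ.2] at this

lemma shift_surj_mem {Ω : Set (ℤ → A)} [TopologicalSpace A] (hΩ : IsSubshift Ω)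
    {ω : ℤ → A} (h : ω ∈ Ω) : shiftZ (-1) ω ∈ Ω := by
  have : ω ∈ shift '' Ω := by rw [hΩ.2]; exact h
  obtain ⟨σ, hσ, hs⟩ := this
  have : σ = shiftZ (-1) ω := by
    funext k
    have : ω (k - 1) = σ (k - 1 + 1) := by rw [← hs]; rfl
    simp only [shiftZ]
    have e : k + -1 = k - 1 := by ring
    rw [e, this]
    congr 1
    ring
  rwa [← this]

lemma shiftZ_mem {Ω : Set (ℤ → A)} [TopologicalSpace A] (hΩ : IsSubshift Ω)
    (n : ℤ) {ω : ℤ → A} (h : ω ∈ Ω) : shiftZ n ω ∈ Ω := by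
  induction n using Int.induction_on with
  | zero => rwa [shiftZ_zero]
  | succ k ih =>
    have : shiftZ (k + 1 : ℤ) ω = shift (shiftZ k ω) := by
      rw [← shiftZ_one, shiftZ_shiftZ]
      congr 1
      ring
    rw [this]
    exact shift_mem hΩ ih
  | pred k ih =>
    have : shiftZ (-(k : ℤ) - 1) ω = shiftZ (-1) (shiftZ (-k) ω) := by
      rw [shiftZ_shiftZ]
      congr 1
      ring
    rw [this]
    exact shift_surj_mem hΩ ih

lemma occursAt_shiftZ {v : List A} {ω : ℤ → A} {n k : ℤ}
    (h : OccursAt v (shiftZ n ω) k) : OccursAt v ω (k + n) := by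
  rw [occursAt_iff_getElem] at h ⊢
  intro j hj
  have := h j hj
  simp only [shiftZ] at this
  rw [← this]
  congr 1
  ring

lemma uniform_recurrence [Fintype A] [TopologicalSpace A] [DiscreteTopology A]
    {Ω : Set (ℤ → A)} (hΩ : IsSubshift Ω) (hne : Ω.Nonempty) (hmin : IsMinimal Ω)
    {v : List A} (hv : v ∈ words Ω) :
    ∃ R : ℕ, 1 ≤ R ∧ ∀ w ∈ words Ω, R ≤ w.length → ∃ t, OccursIn v w t := by
  classical
  set S : ℤ → Set (ℤ → A) := fun m => {ρ | OccursAt v ρ m} with hS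
  have hSopen : ∀ m, IsOpen (S m) := by
    intro m
    have : S m = ⋂ i : Fin v.length, (fun ρ : ℤ → A => ρ (m + (i : ℕ))) ⁻¹' {v.get i} := by
      ext ρ
      simp only [Set.mem_iInter, Set.mem_preimage, Set.mem_singleton_iff]
      exact Iff.rfl
    rw [this]
    exact isOpen_iInter_of_finite fun i =>
      (continuous_apply (m + (i : ℕ))).isOpen_preimage _ (isOpen_discrete _)
  have hcover : Ω ⊆ ⋃ m : ℤ, S m := by
    intro ρ hρ
    obtain ⟨ω0, hω0, k0, hk0⟩ := hv
    have hcl : ω0 ∈ closure {σ | ∃ n : ℤ, σ = shiftZ n ρ} := hmin ρ hρ hω0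
    rw [mem_closure_iff] at hcl
    obtain ⟨σ, hσS, n, rfl⟩ := hcl (S k0) (hSopen k0) hk0
    have : OccursAt v ρ (k0 + n) := occursAt_shiftZ hσS
    exact Set.mem_iUnion.mpr ⟨k0 + n, this⟩
  have hcomp : IsCompact Ω := hΩ.1.isCompact
  obtain ⟨t, ht⟩ := hcomp.elim_finite_subcover S hSopen hcover
  set N : ℕ := t.sup fun m => m.natAbs with hN
  refine ⟨2 * N + v.length + 1, by omega, ?_⟩
  rintro w ⟨ω, hω, k, hk⟩ hwlen
  have hρ : shiftZ (k + N) ω ∈ Ω := shiftZ_mem hΩ _ hω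
  obtain ⟨m, hmt, hmS⟩ := Set.mem_iUnion₂.mp (ht hρ)
  have hmN : m.natAbs ≤ N := Finset.le_sup (f := fun m : ℤ => m.natAbs) hmt
  have hocc : OccursAt v ω (m + (k + N)) := occursAt_shiftZ hmS
  set i : ℕ := (N + m).toNat with hi
  have hiN : (i : ℤ) = N + m ∧ i ≤ 2 * N := by
    constructor
    · rw [hi, Int.toNat_of_nonneg (by omega)]
    · omega
  refine ⟨i, occursIn_iff_getElem.mpr ⟨by omega, fun j hj hw => ?_⟩⟩
  rw [occursAt_iff_getElem] at hk hocc
  have h1 := hk (i + j) (by omega)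
  have h2 := hocc j hj
  rw [← h1]
  rw [← h2]
  congr 1
  push_cast
  omega

end AuxF


section AuxG
variable {A : Type*}

/-- The largest length of a `v`-free word in `W`. -/
noncomputable def freeLen (W : Set (List A)) (v : List A) : ℕ :=
  sSup {L | ∃ z ∈ W, z.length = L ∧ ∀ t, ¬ OccursIn v z t}

lemma nil_mem_words {Ω : Set (ℤ → A)} (hne : Ω.Nonempty) : [] ∈ words Ω := by
  obtain ⟨ω, hω⟩ := hne
  exact ⟨ω, hω, 0, fun i => i.elim0⟩

lemma not_occursIn_nil {v : List A} (hv : v ≠ []) (t : ℕ) : ¬ OccursIn v [] t := by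
  intro h
  have h1 := h.length_le
  have h2 : 1 ≤ v.length := List.length_pos_iff.mpr hv
  simp only [List.length_nil] at h1
  omega

lemma freeLen_bddAbove {Ω : Set (ℤ → A)} {v : List A} {R : ℕ}
    (hR : ∀ w ∈ words Ω, R ≤ w.length → ∃ t, OccursIn v w t) :
    BddAbove {L | ∃ z ∈ words Ω, z.length = L ∧ ∀ t, ¬ OccursIn v z t} := by
  refine ⟨R, fun L hL => ?_⟩
  obtain ⟨z, hz, hzl, hzf⟩ := hL
  by_contra hc
  obtain ⟨t, ht⟩ := hR z hz (by omega)
  exact hzf t ht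

lemma freeLen_exists_free {Ω : Set (ℤ → A)} (hne : Ω.Nonempty) {v : List A} (hv0 : v ≠ [])
    {R : ℕ} (hR : ∀ w ∈ words Ω, R ≤ w.length → ∃ t, OccursIn v w t) :
    ∀ n ≤ freeLen (words Ω) v,
      ∃ u ∈ words Ω, u.length = n ∧ ∀ t, ¬ OccursIn v u t := by
  intro n hn
  have hmem := Nat.sSup_mem (s := {L | ∃ z ∈ words Ω, z.length = L ∧ ∀ t, ¬ OccursIn v z t})
    ⟨0, [], nil_mem_words hne, rfl, not_occursIn_nil hv0⟩ (freeLen_bddAbove hR)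
  obtain ⟨z, hz, hzl, hzf⟩ := hmem
  rw [freeLen] at hn
  refine ⟨z.take n, words_infix hz (List.take_prefix _ _), by simp [List.length_take]; omega, ?_⟩
  intro t ht
  exact hzf t (occursIn_take ht)

lemma freeLen_succ_occurs {Ω : Set (ℤ → A)} {v : List A}
    {R : ℕ} (hR : ∀ w ∈ words Ω, R ≤ w.length → ∃ t, OccursIn v w t) :
    ∀ u ∈ words Ω, u.length = freeLen (words Ω) v + 1 → ∃ t, OccursIn v u t := by
  intro u hu hul
  by_contra hc
  push_neg at hc
  have : freeLen (words Ω) v + 1 ∈ {L | ∃ z ∈ words Ω, z.length = L ∧ ∀ t, ¬ OccursIn v z t} :=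
    ⟨u, hu, hul, hc⟩
  have h2 := le_csSup (freeLen_bddAbove hR) this
  have h3 : freeLen (words Ω) v
      = sSup {L | ∃ z ∈ words Ω, z.length = L ∧ ∀ t, ¬ OccursIn v z t} := rfl
  omega

end AuxG


section AuxE
variable {A : Type*}

lemma nub_package [Fintype A] [TopologicalSpace A] [DiscreteTopology A]
    {Ω : Set (ℤ → A)} (hΩ : IsSubshift Ω) (hne : Ω.Nonempty) (hmin : IsMinimal Ω)
    (hSET : SET (words Ω)) {v : List A} (hv : v ∈ words Ω) (hv0 : v ≠ []) :
    ∃ x : ℝ, 0 < x ∧ nu (words Ω) v = (x : EReal) ∧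
      (∀ ε : ℝ, 0 < ε → ∃ M : ℕ, ∀ w ∈ words Ω, M ≤ w.length →
        (ell v w : ℝ) ≤ (x + ε) * w.length) ∧
      ((v.length : ℝ) ≤ 4 * x * ((freeLen (words Ω) v : ℝ) + 1)) := by
  obtain ⟨R, hR1, hR⟩ := uniform_recurrence hΩ hne hmin hv
  have hlen := exists_word_length hne (Ω := Ω)
  haveI : (wordsFilter (words Ω)).NeBot := wordsFilter_neBot hlen
  set F : List A → ℝ := fun w => -(ell v w : ℝ) with hF
  have hsub : IsSubadditive (words Ω) F := by
    intro a b _ _ _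
    have h1 := ell_append hv0 a b
    have h2 : ((ell v a : ℕ) : ℝ) + ((ell v b : ℕ) : ℝ) ≤ ((ell v (a ++ b) : ℕ) : ℝ) := by
      exact_mod_cast h1
    simp only [hF]
    linarith
  have hT := hSET F hsub
  set l := ⨅ n : {n : ℕ // 1 ≤ n}, ((wordSup (words Ω) F n.1 : ℝ) : EReal) with hl
  have hv1 : (1:ℝ) ≤ v.length := by exact_mod_cast List.length_pos_iff.mpr hv0
  have hws_ub : ∀ n : ℕ, 1 ≤ n → wordSup (words Ω) F n ≤ 0 := by
    intro n hn
    refine wordSup_le (hlen n) (fun u hu hul => ?_)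
    have hFu : F u ≤ 0 := by
      simp only [hF]
      simp
    exact div_nonpos_of_nonpos_of_nonneg hFu (Nat.cast_nonneg n)
  have hws_lb : ∀ n : {n : ℕ // 1 ≤ n},
      ((-1 : ℝ) : EReal) ≤ ((wordSup (words Ω) F n.1 : ℝ) : EReal) := by
    rintro ⟨n, hn⟩
    rw [EReal.coe_le_coe_iff]
    obtain ⟨u, hu, hul⟩ := hlen n
    have hn0 : (0:ℝ) < n := by exact_mod_cast hn
    have hell : (ell v u : ℝ) ≤ n := by
      rw [← hul]
      exact_mod_cast ell_le_length (w := u) hv0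
    have h1 : -1 ≤ F u / n := by
      simp only [hF]
      rw [neg_div]
      have : (ell v u : ℝ) / n ≤ 1 := by rw [div_le_one hn0]; exact hell
      linarith
    exact le_trans h1 (le_wordSup F hu hul)
  have hlb : ((-1 : ℝ) : EReal) ≤ l := le_iInf hws_lb
  have hub0 : l ≤ ((0:ℝ) : EReal) := by
    refine le_trans (iInf_le _ ⟨1, le_rfl⟩) ?_
    exact EReal.coe_le_coe_iff.mpr (hws_ub 1 le_rfl)
  have hneTop : l ≠ ⊤ := by
    intro he; rw [he] at hub0; exact absurd hub0 (by simp)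
  have hneBot : l ≠ ⊥ := by
    intro he
    rw [he] at hlb
    have hbot : ((-1:ℝ) : EReal) = ⊥ := le_bot_iff.mp hlb
    exact EReal.coe_ne_bot _ hbot
  set L : ℝ := l.toReal with hLdef
  have hLl : ((L : ℝ) : EReal) = l := EReal.coe_toReal hneTop hneBot
  set x : ℝ := -L with hxdef
  have hxR : (v.length : ℝ) / R ≤ x := by
    have h1 : l ≤ ((wordSup (words Ω) F R : ℝ) : EReal) := iInf_le (fun n : {n : ℕ // 1 ≤ n} => ((wordSup (words Ω) F n.1 : ℝ) : EReal)) ⟨R, hR1⟩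
    have hR0 : (0:ℝ) < R := by exact_mod_cast hR1
    have h2 : wordSup (words Ω) F R ≤ -((v.length : ℝ) / R) := by
      refine wordSup_le (hlen R) (fun u hu hul => ?_)
      obtain ⟨t, ht⟩ := hR u hu (le_of_eq hul.symm)
      have hocc : (v.length : ℝ) ≤ (ell v u : ℝ) := by
        exact_mod_cast length_le_ell hv0 ht
      have h3 : (v.length : ℝ)/R ≤ (ell v u : ℝ)/R := by
        exact (div_le_div_iff_of_pos_right hR0).mpr hocc
      calc F u / R = -((ell v u : ℝ)/R) := by simp only [hF]; rw [neg_div]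
      _ ≤ -((v.length : ℝ)/R) := neg_le_neg h3
    have h4 : l ≤ ((-((v.length : ℝ)/R) : ℝ) : EReal) :=
      le_trans h1 (EReal.coe_le_coe_iff.mpr h2)
    rw [← hLl, EReal.coe_le_coe_iff] at h4
    rw [hxdef]
    linarith
  have hxpos : 0 < x := by
    have : (0:ℝ) < (v.length : ℝ) / R := by
      have hR0 : (0:ℝ) < R := by exact_mod_cast hR1
      positivity
    linarith
  have hunif : ∀ ε : ℝ, 0 < ε → ∃ M : ℕ, ∀ w ∈ words Ω, M ≤ w.length →
      (ell v w : ℝ) ≤ (x + ε) * w.length := by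
    intro ε hε
    have hxU : l ∈ Set.Ioi ((L - ε : ℝ) : EReal) := by
      rw [← hLl, Set.mem_Ioi]
      exact_mod_cast (by linarith : L - ε < L)
    obtain ⟨M0, hM0⟩ := tendsto_wordsFilter_mem hT isOpen_Ioi hxU
    refine ⟨max M0 1, fun w hw hwl => ?_⟩
    have h1 := hM0 w hw (by omega)
    rw [Set.mem_Ioi, EReal.coe_lt_coe_iff] at h1
    have hw0 : (0:ℝ) < w.length := by
      have : (1:ℕ) ≤ w.length := by omega
      exact_mod_cast this
    have h2 : (ell v w : ℝ) / w.length < x + ε := by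
      simp only [hF] at h1
      rw [neg_div] at h1
      linarith
    rw [div_lt_iff₀ hw0] at h2
    exact le_of_lt h2
  have hnu : nu (words Ω) v = (x : EReal) := by
    have hTneg := hT.neg
    have hfun : (fun w : List A => -(((F w / (w.length : ℝ) : ℝ)) : EReal))
        = fun w : List A =>
          ((((maxDisjoint v w * v.length : ℕ) : ℝ) / (w.length : ℝ) : ℝ) : EReal) := by
      funext w
      have hre : -(F w / (w.length : ℝ))
          = ((maxDisjoint v w * v.length : ℕ) : ℝ) / (w.length : ℝ) := by
        simp only [hF]
        rw [neg_div, neg_neg]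
        norm_num [ell]
      rw [← EReal.coe_neg, hre]
    rw [hfun] at hTneg
    have hliminf := hTneg.liminf_eq
    have hxl : -l = (x : EReal) := by
      rw [← hLl, ← EReal.coe_neg, hxdef]
    rw [nu, liminfWords, hliminf, hxl]
  refine ⟨x, hxpos, hnu, hunif, ?_⟩
  set L1 : ℕ := freeLen (words Ω) v + 1 with hL1
  have hL1pos : 0 < L1 := by omega
  obtain ⟨M, hM⟩ := hunif x hxpos
  obtain ⟨w, hw, hwl⟩ := hlen (max M (2 * L1))
  set q : ℕ := w.length / L1 with hq
  have hqL : q * L1 ≤ w.length := Nat.div_mul_le_self _ _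
  have hblocks : ∀ i, i < q → ∃ t, OccursIn v ((w.drop (i * L1)).take L1) t := by
    intro i hi
    have hiL : i * L1 + L1 ≤ w.length := by
      have h5 : (i+1) * L1 ≤ q * L1 := Nat.mul_le_mul_right _ (by omega)
      nlinarith
    have hblen : ((w.drop (i * L1)).take L1).length = L1 := by
      simp [List.length_take]
      omega
    have hbW : (w.drop (i * L1)).take L1 ∈ words Ω := by
      refine words_factor hw (i := i * L1) ⟨?_, List.take_prefix _ _⟩
      rw [hblen]
      exact hiL
    exact freeLen_succ_occurs hR _ hbW (by rw [hblen])
  have hchop := chop_le_maxDisjoint hv0 hL1pos hqL hblocks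
  have hell_lb : ((q * v.length : ℕ) : ℝ) ≤ (ell v w : ℝ) := by
    have h6 : q * v.length ≤ ell v w := Nat.mul_le_mul_right _ hchop
    exact_mod_cast h6
  have hell_ub : (ell v w : ℝ) ≤ (x + x) * w.length := hM w hw (by omega)
  have hq1 : 1 ≤ q := by
    rw [hq]
    rw [Nat.one_le_div_iff hL1pos]
    omega
  have hwq : (w.length : ℝ) ≤ 2 * q * L1 := by
    have h7 := Nat.div_add_mod w.length L1
    have h8 : w.length % L1 < L1 := Nat.mod_lt _ hL1pos
    rw [Nat.mul_comm L1 q] at h7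
    have h8b : w.length ≤ q * L1 + L1 := by omega
    have h8c : L1 ≤ q * L1 := Nat.le_mul_of_pos_left L1 (by omega)
    have h9 : w.length ≤ 2 * q * L1 := by
      have : 2 * q * L1 = q * L1 + q * L1 := by ring
      omega
    exact_mod_cast h9
  have hq0 : (0:ℝ) < q := by exact_mod_cast hq1
  have hxw : (0:ℝ) ≤ x := le_of_lt hxpos
  have hchain : (q:ℝ) * v.length ≤ q * (4 * x * L1) := by
    have h10 : (2*x) * (w.length : ℝ) ≤ (2*x) * (2 * q * L1) :=
      mul_le_mul_of_nonneg_left hwq (by linarith)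
    push_cast at hell_lb
    nlinarith [hell_lb, hell_ub, h10]
  have hfin := (mul_le_mul_iff_right₀ hq0).mp hchain
  have hcast : (L1 : ℝ) = (freeLen (words Ω) v : ℝ) + 1 := by
    rw [hL1]; push_cast; ring
  rw [hcast] at hfin
  linarith

end AuxE


section AuxH
variable {A : Type*}

lemma geom_half_le_two (m : ℕ) : ∑ j ∈ Finset.range m, ((1:ℝ)/2)^j ≤ 2 := by
  induction m with
  | zero => simp
  | succ m ih =>
    have h := geom_sum_eq (by norm_num : (1/2 : ℝ) ≠ 1) (m+1)
    rw [h]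
    have hp : (0:ℝ) ≤ (1/2 : ℝ)^(m+1) := by positivity
    have : ((1/2:ℝ)^(m+1) - 1) / (1/2 - 1) = 2 - 2 * (1/2)^(m+1) := by
      field_simp
      ring
    rw [this]
    linarith

/-- The auxiliary recursively defined sequence of bad words. -/
def seqAux (pick : ℕ → List A → List A) : ℕ → List A
  | 0 => pick 0 []
  | (k+1) => pick (k+1) (seqAux pick k)

/-- Previous element (or `[]`). -/
def prevAux (pick : ℕ → List A → List A) : ℕ → List A
  | 0 => []
  | (k+1) => seqAux pick k

lemma seqAux_eq (pick : ℕ → List A → List A) (k : ℕ) :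
    seqAux pick k = pick k (prevAux pick k) := by
  cases k <;> rfl

end AuxH


set_option maxHeartbeats 1000000 in
/-- for a minimal subshift, the uniform subadditive ergodic theorem (SET)
implies (PQ). -/
theorem SET_implies_PQ
    {A : Type*} [Fintype A] [Nonempty A] [TopologicalSpace A] [DiscreteTopology A]
    (Ω : Set (ℤ → A)) (hΩ : IsSubshift Ω) (hne : Ω.Nonempty) (hmin : IsMinimal Ω)
    (hSET : SET (words Ω)) :
    PQ (words Ω) := by
  classical
  by_contra hPQ
  have hlen := exists_word_length hne (Ω := Ω)
  haveI : (wordsFilter (words Ω)).NeBot := wordsFilter_neBot hlen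
  have hpkg : ∀ v : List A, ∃ x : ℝ, (v ∈ words Ω ∧ v ≠ []) →
      0 < x ∧ nu (words Ω) v = (x : EReal) ∧
      (∀ ε : ℝ, 0 < ε → ∃ M : ℕ, ∀ w ∈ words Ω, M ≤ w.length →
        (ell v w : ℝ) ≤ (x + ε) * w.length) ∧
      ((v.length : ℝ) ≤ 4 * x * ((freeLen (words Ω) v : ℝ) + 1)) := by
    intro v
    by_cases h : v ∈ words Ω ∧ v ≠ []
    · obtain ⟨x, hx⟩ := nub_package hΩ hne hmin hSET h.1 h.2
      exact ⟨x, fun _ => hx⟩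
    · exact ⟨1, fun hc => absurd hc h⟩
  choose x hx using hpkg
  set δ : ℕ → ℝ := fun k => (1/100) * (1/2)^k with hδ
  have δpos : ∀ k, 0 < δ k := by intro k; rw [hδ]; positivity
  have δdec : ∀ k, δ (k+1) ≤ δ k := by
    intro k
    rw [hδ]
    dsimp only
    have h1 : ((1:ℝ)/2)^(k+1) ≤ (1/2)^k :=
      pow_le_pow_of_le_one (by norm_num) (by norm_num) (by omega)
    linarith
  have δle : ∀ k, δ k ≤ 1/100 := by
    intro k
    rw [hδ]
    dsimp only
    have h1 : ((1:ℝ)/2)^k ≤ 1 := pow_le_one₀ (by norm_num) (by norm_num)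
    nlinarith
  have δsum : ∀ m, ∑ j ∈ Finset.range m, δ j ≤ 1/50 := by
    intro m
    rw [hδ]
    dsimp only
    rw [← Finset.mul_sum]
    have h1 := geom_half_le_two m
    have h2 : (0:ℝ) ≤ ∑ j ∈ Finset.range m, ((1:ℝ)/2)^j := by positivity
    nlinarith
  have hMex : ∀ (v : List A) (k : ℕ), ∃ M : ℕ, (v ∈ words Ω ∧ v ≠ []) →
      ∀ w ∈ words Ω, M ≤ w.length → (ell v w : ℝ) ≤ (x v + δ k) * w.length := by
    intro v k
    by_cases h : v ∈ words Ω ∧ v ≠ []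
    · obtain ⟨M, hM⟩ := (hx v h).2.2.1 (δ k) (δpos k)
      exact ⟨M, fun _ => hM⟩
    · exact ⟨0, fun hc => absurd hc h⟩
  choose Mf hMf using hMex
  have hcmex : ∀ T : ℕ, ∃ c : ℝ, 0 < c ∧
      ∀ u, u ∈ words Ω → u ≠ [] → u.length ≤ T → c ≤ x u := by
    intro T
    have hfinlen : {l : List A | l.length ≤ T}.Finite := by
      have he : {l : List A | l.length ≤ T}
          = ⋃ n ∈ Finset.range (T+1), {l : List A | l.length = n} := by
        ext l
        simp [Nat.lt_succ_iff]
      rw [he]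
      exact Set.Finite.biUnion (Finset.range (T+1)).finite_toSet
        (fun n _ => List.finite_length_eq A n)
    have hfin : {u : List A | u ∈ words Ω ∧ u ≠ [] ∧ u.length ≤ T}.Finite :=
      hfinlen.subset (fun u hu => hu.2.2)
    rcases hfin.toFinset.eq_empty_or_nonempty with hGe | hGne
    · refine ⟨1, one_pos, fun u h1 h2 h3 => ?_⟩
      exfalso
      have hu : u ∈ hfin.toFinset := by rw [Set.Finite.mem_toFinset]; exact ⟨h1, h2, h3⟩
      rw [hGe] at hu
      simp at hu
    · refine ⟨(hfin.toFinset.image x).min' (hGne.image x), ?_, ?_⟩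
      · obtain ⟨u, hu, hcu⟩ := Finset.mem_image.mp
          (Finset.min'_mem (hfin.toFinset.image x) (hGne.image x))
        rw [Set.Finite.mem_toFinset] at hu
        rw [← hcu]
        exact (hx u ⟨hu.1, hu.2.1⟩).1
      · intro u h1 h2 h3
        refine Finset.min'_le _ _ (Finset.mem_image.mpr ⟨u, ?_, rfl⟩)
        rw [Set.Finite.mem_toFinset]
        exact ⟨h1, h2, h3⟩
  choose cm hcm1 hcm2 using hcmex
  have hbad : ∀ C : ℝ, 0 < C → ∃ v, v ∈ words Ω ∧ v ≠ [] ∧ x v < C := by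
    intro C hC
    unfold PQ at hPQ
    push_neg at hPQ
    obtain ⟨v, hv1, hv2, hv3⟩ := hPQ C hC
    refine ⟨v, hv1, hv2, ?_⟩
    rw [(hx v ⟨hv1, hv2⟩).2.1] at hv3
    exact_mod_cast hv3
  set T : ℕ → List A → ℕ := fun k prev =>
    max (freeLen (words Ω) prev + 1) (max (Mf prev k) (k + 1)) with hT
  have hT1 : ∀ k prev, freeLen (words Ω) prev + 1 ≤ T k prev := by
    intro k prev; rw [hT]; exact le_max_left _ _
  have hT2 : ∀ k prev, Mf prev k ≤ T k prev := by
    intro k prev; rw [hT]; exact le_trans (le_max_left _ _) (le_max_right _ _)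
  have hT3 : ∀ k prev, k + 1 ≤ T k prev := by
    intro k prev; rw [hT]; exact le_trans (le_max_right _ _) (le_max_right _ _)
  set Cf : ℕ → List A → ℝ := fun k prev =>
    min (δ k) (min (cm (T k prev)) (1 / (4 * (T k prev) + 5))) with hCf
  have Cfpos : ∀ k prev, 0 < Cf k prev := by
    intro k prev
    rw [hCf]
    dsimp only
    refine lt_min (δpos k) (lt_min (hcm1 _) ?_)
    positivity
  have hpickex : ∀ (k : ℕ) (prev : List A),
      ∃ v', v' ∈ words Ω ∧ v' ≠ [] ∧ x v' < Cf k prev :=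
    fun k prev => hbad _ (Cfpos k prev)
  choose pick hp1 hp2 hp3 using hpickex
  set vs : ℕ → List A := seqAux pick with hvs
  have hvsW : ∀ k, vs k ∈ words Ω := by
    intro k; rw [hvs, seqAux_eq]; exact hp1 _ _
  have hvsne : ∀ k, vs k ≠ [] := by
    intro k; rw [hvs, seqAux_eq]; exact hp2 _ _
  have hxC : ∀ k, x (vs k) < Cf k (prevAux pick k) := by
    intro k; rw [hvs, seqAux_eq]; exact hp3 _ _
  have hprev : ∀ k, prevAux pick (k+1) = vs k := fun k => rfl
  have hxδ : ∀ k, x (vs k) < δ k := fun k =>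
    lt_of_lt_of_le (hxC k) (min_le_left _ _)
  have hxpos : ∀ k, 0 < x (vs k) := fun k => (hx (vs k) ⟨hvsW k, hvsne k⟩).1
  have hlen_gtT : ∀ k, T k (prevAux pick k) < (vs k).length := by
    intro k
    by_contra hcon
    push_neg at hcon
    have h1 := hcm2 (T k (prevAux pick k)) (vs k) (hvsW k) (hvsne k) hcon
    have h2 := lt_of_lt_of_le (hxC k) (le_trans (min_le_right _ _) (min_le_left _ _))
    linarith
  have hfreeT : ∀ k, T k (prevAux pick k) < freeLen (words Ω) (vs k) := by
    intro k
    have h1 := (hx (vs k) ⟨hvsW k, hvsne k⟩).2.2.2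
    have h2 := lt_of_lt_of_le (hxC k) (le_trans (min_le_right _ _) (min_le_right _ _))
    have h3 : (1:ℝ) ≤ ((vs k).length : ℝ) := by
      exact_mod_cast List.length_pos_iff.mpr (hvsne k)
    have hT0 : (0:ℝ) < 4 * (T k (prevAux pick k) : ℝ) + 5 := by positivity
    have h4 : (1:ℝ) ≤ 4 * x (vs k) * ((freeLen (words Ω) (vs k) : ℝ) + 1) :=
      le_trans h3 h1
    have hf1 : (0:ℝ) < (freeLen (words Ω) (vs k) : ℝ) + 1 := by positivity
    have h5 : 4 * x (vs k) * ((freeLen (words Ω) (vs k) : ℝ) + 1)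
        < 4 * (1/(4 * (T k (prevAux pick k) : ℝ) + 5)) * ((freeLen (words Ω) (vs k) : ℝ) + 1) := by
      have hxk := hxpos k
      nlinarith [h2, hf1]
    have h56 : (1:ℝ) < 4 * (1/(4 * (T k (prevAux pick k) : ℝ) + 5))
        * ((freeLen (words Ω) (vs k) : ℝ) + 1) := lt_of_le_of_lt h4 h5
    have he : 4 * (1/(4 * (T k (prevAux pick k) : ℝ) + 5))
        * ((freeLen (words Ω) (vs k) : ℝ) + 1)
        = (4 * ((freeLen (words Ω) (vs k) : ℝ) + 1)) / (4 * (T k (prevAux pick k) : ℝ) + 5) := by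
      field_simp
    rw [he, lt_div_iff₀ hT0] at h56
    have h7 : ((T k (prevAux pick k) : ℝ)) < (freeLen (words Ω) (vs k) : ℝ) := by linarith
    exact_mod_cast h7
  have hlen_le_free : ∀ k, (vs k).length ≤ freeLen (words Ω) (vs k) := by
    intro k
    have h1 := (hx (vs k) ⟨hvsW k, hvsne k⟩).2.2.2
    have h2 := lt_of_lt_of_le (hxδ k) (δle k)
    have hxk := hxpos k
    have hf1 : (0:ℝ) < (freeLen (words Ω) (vs k) : ℝ) + 1 := by positivity
    have h3 : ((vs k).length : ℝ) ≤ 4 * (1/100) * ((freeLen (words Ω) (vs k) : ℝ) + 1) := by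
      nlinarith
    have h4 : (1:ℝ) ≤ ((vs k).length : ℝ) := by
      exact_mod_cast List.length_pos_iff.mpr (hvsne k)
    have h5 : ((vs k).length : ℝ) ≤ (freeLen (words Ω) (vs k) : ℝ) := by nlinarith
    exact_mod_cast h5
  set f : ℕ → ℕ := fun k => freeLen (words Ω) (vs k) with hf
  have hfstep : ∀ k, f k < f (k+1) := by
    intro k
    have h1 := hfreeT (k+1)
    rw [hprev] at h1
    have h2 := hT1 (k+1) (vs k)
    rw [hf]
    dsimp only
    omega
  have hfmono : ∀ a b, a ≤ b → f a ≤ f b := by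
    intro a b hab
    exact (strictMono_nat_of_lt_succ hfstep).monotone hab
  have hfge : ∀ k, k + 1 ≤ f k := by
    intro k
    induction k with
    | zero =>
      have h1 := hfreeT 0
      have h2 := hT3 0 (prevAux pick 0)
      rw [hf]
      dsimp only
      omega
    | succ k ih =>
      have := hfstep k
      omega
  have hlen_gt_f : ∀ k, f k < (vs (k+1)).length := by
    intro k
    have h1 := hlen_gtT (k+1)
    rw [hprev] at h1
    have h2 := hT1 (k+1) (vs k)
    rw [hf]
    dsimp only
    omega
  have hvln_mono : ∀ j k, k < j → f k < (vs j).length := by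
    intro j k hkj
    have h1 : f (j-1) < (vs j).length := by
      have h2 := hlen_gt_f (j-1)
      have hj : j - 1 + 1 = j := by omega
      rwa [hj] at h2
    have h2 : f k ≤ f (j-1) := hfmono _ _ (by omega)
    omega
  have hMT : ∀ k, Mf (vs k) (k+1) ≤ f (k+1) := by
    intro k
    have h1 := hfreeT (k+1)
    rw [hprev] at h1
    have h2 := hT2 (k+1) (vs k)
    rw [hf]
    dsimp only
    omega
  -- key claim
  have hkey : ∀ n : ℕ, 1 ≤ n → ∃ u ∈ words Ω, u.length = n ∧
      (3/4 : ℝ) * n ≤ (dp vs u : ℝ) := by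
    intro n hn1
    have hex : ∃ k, n ≤ f k := ⟨n, by have := hfge n; omega⟩
    obtain ⟨k, hkf, hkmin⟩ : ∃ k, n ≤ f k ∧ ∀ j, j < k → f j < n :=
      ⟨Nat.find hex, Nat.find_spec hex, fun j hj => by
        have := Nat.find_min hex hj; omega⟩
    obtain ⟨R, hR1, hR⟩ := uniform_recurrence hΩ hne hmin (hvsW k)
    cases k with
    | zero =>
      obtain ⟨u, huW, hul, hufree⟩ := freeLen_exists_free hne (hvsne 0) hR n hkf
      refine ⟨u, huW, hul, ?_⟩
      have hcond : ∀ j, 1 ≤ j → u.length < (vs j).length := by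
        intro j hj
        have := hvln_mono j 0 (by omega)
        omega
      have hdp := dp_ge vs hvsne 1 u hcond
      rw [Finset.sum_range_one, ell_eq_zero hufree] at hdp
      have hdp' : (n:ℝ) ≤ (dp vs u : ℝ) := by exact_mod_cast (by omega : n ≤ dp vs u)
      have hn0 : (0:ℝ) ≤ n := by positivity
      linarith
    | succ k' =>
      set m : ℕ := max n (Mf (vs k') (k'+1)) with hm
      have hmf : m ≤ f (k'+1) := by
        rw [hm]
        exact max_le hkf (hMT k')
      obtain ⟨z, hzW, hzl, hzfree⟩ := freeLen_exists_free hne (hvsne (k'+1)) hR m hmf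
      set q : ℕ := m / n with hq
      have hn0 : 0 < n := hn1
      have hq1 : 1 ≤ q := by
        rw [hq, Nat.one_le_div_iff hn0]
        rw [hm]
        exact le_max_left _ _
      have hqn : q * n ≤ m := by rw [hq]; exact Nat.div_mul_le_self _ _
      have hsumN : ∑ i ∈ Finset.range q, ell (vs k') ((z.drop (i*n)).take n)
          ≤ ell (vs k') z := sum_ell_blocks (hvsne k') z n q (by rw [hzl]; exact hqn)
      have hz_ub : (ell (vs k') z : ℝ) ≤ (x (vs k') + δ (k'+1)) * m := by
        have h1 := hMf (vs k') (k'+1) ⟨hvsW k', hvsne k'⟩ z hzW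
          (by rw [hzl, hm]; exact le_max_right _ _)
        rwa [hzl] at h1
      have hm2qn : (m:ℝ) ≤ 2 * q * n := by
        have h7 := Nat.div_add_mod m n
        rw [Nat.mul_comm n q] at h7
        have h8 : m % n < n := Nat.mod_lt _ hn0
        have h8c : n ≤ q * n := Nat.le_mul_of_pos_left n (by omega)
        have h9 : m ≤ 2 * q * n := by
          have h10 : 2 * q * n = q * n + q * n := by ring
          omega
        exact_mod_cast h9
      have hxc0 : (0:ℝ) < x (vs k') + δ (k'+1) := by
        have := hxpos k'
        have := δpos (k'+1)
        linarith
      have havg : ∃ i, i < q ∧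
          (ell (vs k') ((z.drop (i*n)).take n) : ℝ) ≤ (x (vs k') + δ (k'+1)) * (2 * n) := by
        by_contra hco
        push_neg at hco
        have hlt : ∀ i ∈ Finset.range q, (x (vs k') + δ (k'+1)) * (2*n)
            < (ell (vs k') ((z.drop (i*n)).take n) : ℝ) := by
          intro i hi
          exact hco i (Finset.mem_range.mp hi)
        have hsum2 := Finset.sum_lt_sum_of_nonempty
          (by rw [Finset.nonempty_range_iff]; omega) hlt
        rw [Finset.sum_const, Finset.card_range, nsmul_eq_mul] at hsum2
        have hsum3 : (∑ i ∈ Finset.range q,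
            (ell (vs k') ((z.drop (i*n)).take n) : ℝ)) ≤ (ell (vs k') z : ℝ) := by
          exact_mod_cast hsumN
        have hmul := mul_le_mul_of_nonneg_left hm2qn (le_of_lt hxc0)
        nlinarith [hsum2, hsum3, hz_ub, hmul]
      obtain ⟨i, hiq, hiavg⟩ := havg
      have hiL : i * n + n ≤ m := by
        have h5 : (i+1) * n ≤ q * n := Nat.mul_le_mul_right _ (by omega)
        nlinarith
      set u : List A := (z.drop (i*n)).take n with hu
      have hul : u.length = n := by
        rw [hu]
        simp [List.length_take]
        omega
      have huW : u ∈ words Ω := by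
        rw [hu]
        refine words_factor hzW (i := i * n) ⟨?_, List.take_prefix _ _⟩
        have hlt : (List.take n (List.drop (i*n) z)).length = n := by
          simp [List.length_take]
          omega
        rw [hlt, hzl]
        exact hiL
      have hufree : ∀ t, ¬ OccursIn (vs (k'+1)) u t := by
        intro t ht
        have h1 : OccursIn (vs (k'+1)) (z.drop (i*n)) t := occursIn_take (by rwa [hu] at ht)
        have h2 : i * n ≤ z.length := by rw [hzl]; omega
        exact hzfree _ (occursIn_drop h2 h1)
      refine ⟨u, huW, hul, ?_⟩
      have hcond : ∀ j, k' + 2 ≤ j → u.length < (vs j).length := by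
        intro j hj
        have h1 := hvln_mono j (k'+1) (by omega)
        omega
      have hdp := dp_ge vs hvsne (k'+2) u hcond
      have hterm : ∀ j ∈ Finset.range (k'+2), (ell (vs j) u : ℝ) ≤ 4 * δ j * n := by
        intro j hj
        rw [Finset.mem_range] at hj
        rcases lt_trichotomy j k' with hjk | hjk | hjk
        · -- uniform regime
          have hMle : Mf (vs j) (j+1) ≤ u.length := by
            have h1 := hMT j
            have h2 := hkmin (j+1) (by omega)
            omega
          have h3 := hMf (vs j) (j+1) ⟨hvsW j, hvsne j⟩ u huW hMle
          rw [hul] at h3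
          have h4 : x (vs j) + δ (j+1) ≤ 2 * δ j := by
            have := hxδ j
            have := δdec j
            linarith
          have hn0' : (0:ℝ) ≤ n := Nat.cast_nonneg n
          have h5 : (x (vs j) + δ (j+1)) * n ≤ (2 * δ j) * n :=
            mul_le_mul_of_nonneg_right h4 hn0'
          have h6 : (0:ℝ) ≤ δ j * n := mul_nonneg (le_of_lt (δpos j)) hn0'
          linarith
        · -- j = k' : the averaged block
          subst hjk
          have h4 : (x (vs j) + δ (j+1)) * (2*n) ≤ 4 * δ j * n := by
            have h4a := hxδ j
            have h4b := δdec j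
            have hn0' : (0:ℝ) ≤ n := Nat.cast_nonneg n
            have h4c : x (vs j) + δ (j+1) ≤ 2 * δ j := by linarith
            have h4d : (x (vs j) + δ (j+1)) * (2*n) ≤ (2 * δ j) * (2*n) :=
              mul_le_mul_of_nonneg_right h4c (by linarith)
            have h4e : (2 * δ j) * (2*(n:ℝ)) = 4 * δ j * n := by ring
            linarith
          calc (ell (vs j) u : ℝ) ≤ (x (vs j) + δ (j+1)) * (2*n) := hiavg
          _ ≤ 4 * δ j * n := h4
        · -- j = k'+1 : free
          have hj1 : j = k'+1 := by omega
          subst hj1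
          rw [ell_eq_zero hufree]
          have h6 : (0:ℝ) ≤ 4 * δ (k'+1) * n :=
            mul_nonneg (mul_nonneg (by norm_num) (le_of_lt (δpos (k'+1)))) (Nat.cast_nonneg n)
          simpa using h6
      have hsumu : (∑ j ∈ Finset.range (k'+2), (ell (vs j) u : ℝ)) ≤ (1/4 : ℝ) * n := by
        calc (∑ j ∈ Finset.range (k'+2), (ell (vs j) u : ℝ))
            ≤ ∑ j ∈ Finset.range (k'+2), 4 * δ j * n := Finset.sum_le_sum hterm
        _ = 4 * n * (∑ j ∈ Finset.range (k'+2), δ j) := by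
            rw [Finset.mul_sum]
            refine Finset.sum_congr rfl (fun j _ => by ring)
        _ ≤ 4 * n * (1/50) := by
            have := δsum (k'+2)
            have hn0' : (0:ℝ) ≤ n := by positivity
            nlinarith
        _ ≤ (1/4 : ℝ) * n := by nlinarith [(by positivity : (0:ℝ) ≤ (n:ℝ))]
      have hdpR : (u.length : ℝ) ≤ (dp vs u : ℝ)
          + (∑ j ∈ Finset.range (k'+2), (ell (vs j) u : ℝ)) := by
        push_cast
        exact_mod_cast hdp
      rw [hul] at hdpR
      linarith
  -- apply SET to dp
  set Fd : List A → ℝ := fun w => (dp vs w : ℝ) with hFd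
  have hsubd : IsSubadditive (words Ω) Fd := by
    intro a b _ _ _
    rw [hFd]
    dsimp only
    exact_mod_cast dp_subadd vs a b
  have hTd := hSET Fd hsubd
  have hldlb : (((1:ℝ)/2 : ℝ) : EReal)
      ≤ ⨅ n : {n : ℕ // 1 ≤ n}, ((wordSup (words Ω) Fd n.1 : ℝ) : EReal) := by
    refine le_iInf ?_
    rintro ⟨n, hn⟩
    rw [EReal.coe_le_coe_iff]
    obtain ⟨u, huW, hul, hudp⟩ := hkey n hn
    have h1 : Fd u / n ≤ wordSup (words Ω) Fd n := le_wordSup Fd huW hul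
    have hn0 : (0:ℝ) < n := by exact_mod_cast hn
    have h2 : (1:ℝ)/2 ≤ Fd u / n := by
      rw [hFd]
      dsimp only
      rw [le_div_iff₀ hn0]
      nlinarith
    linarith
  have hU : (⨅ n : {n : ℕ // 1 ≤ n}, ((wordSup (words Ω) Fd n.1 : ℝ) : EReal))
      ∈ Set.Ioi (((1:ℝ)/4 : ℝ) : EReal) := by
    rw [Set.mem_Ioi]
    refine lt_of_lt_of_le ?_ hldlb
    exact_mod_cast (by norm_num : (1:ℝ)/4 < 1/2)
  obtain ⟨L0, hL0⟩ := tendsto_wordsFilter_mem hTd isOpen_Ioi hU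
  have hwlen : L0 ≤ (vs (L0+1)).length := by
    have h1 := hvln_mono (L0+1) L0 (by omega)
    have h2 := hfge L0
    omega
  have h3 := hL0 (vs (L0+1)) (hvsW _) hwlen
  rw [Set.mem_Ioi] at h3
  have h4 : dp vs (vs (L0+1)) = 0 := dp_self_eq_zero vs (hvsne (L0+1))
  have h5 : (Fd (vs (L0+1)) / ((vs (L0+1)).length : ℝ) : ℝ) = 0 := by
    rw [hFd]
    dsimp only
    rw [h4]
    simp
  rw [h5] at h3
  have h6 := EReal.coe_lt_coe_iff.mp h3
  norm_num at h6


end SubshiftErgodic
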